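/- For any closed hemispherical subset X ⊆ S^{n+1}, the equality s-conv(X) = (s-conv(X))°° holds, i.e. the spherical convex hull of X equals its double spherical polar set. -/

import Mathlib

open scoped RealInnerProductSpace

def sphereSet (n : ℕ) : Set (EuclideanSpace ℝ (Fin (n+2))) := Metric.sphere 0 1

def hemi {n : ℕ} (P : EuclideanSpace ℝ (Fin (n+2))) :
    Set (EuclideanSpace ℝ (Fin (n+2))) :=
  {Q | Q ∈ sphereSet n ∧ 0 ≤ ⟪P, Q⟫}

def sphPolar {n : ℕ} (X : Set (EuclideanSpace ℝ (Fin (n+2)))) :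
    Set (EuclideanSpace ℝ (Fin (n+2))) :=
  ⋂ P ∈ X, hemi P

def Hemispherical {n : ℕ} (X : Set (EuclideanSpace ℝ (Fin (n+2)))) : Prop :=
  ∃ P ∈ sphereSet n, hemi P ∩ X = ∅

def sconv {n : ℕ} (X : Set (EuclideanSpace ℝ (Fin (n+2)))) :
    Set (EuclideanSpace ℝ (Fin (n+2))) :=
  {z | ∃ (k : ℕ) (P : Fin k → EuclideanSpace ℝ (Fin (n+2))) (t : Fin k → ℝ),
    (∀ i, P i ∈ X) ∧ (∀ i, 0 ≤ t i) ∧ (∑ i, t i = 1) ∧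
    z = ‖∑ i, t i • P i‖⁻¹ • ∑ i, t i • P i}

/-- Padding a sum over `Fin k` to a sum over `Fin m`. -/
lemma aux_pad_sum {M : Type*} [AddCommMonoid M] {k m : ℕ} (hkm : k ≤ m) (F : Fin k → M) :
    (∑ j : Fin m, if h : (j : ℕ) < k then F ⟨j, h⟩ else 0) = ∑ i : Fin k, F i := by
  classical
  rw [← Finset.sum_subset (Finset.subset_univ (Finset.univ.map (Fin.castLEEmb hkm)))]
  · rw [Finset.sum_map]
    apply Finset.sum_congr rfl
    intro i _
    have h : ((Fin.castLEEmb hkm i : Fin m) : ℕ) < k := by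
      simpa [Fin.castLEEmb, Fin.castLE] using i.isLt
    rw [dif_pos h]
    exact congrArg F (Fin.ext (by simp [Fin.castLEEmb, Fin.castLE]))
  · intro j _ hj
    have h : ¬ ((j : ℕ) < k) := by
      intro h
      exact hj (Finset.mem_map.mpr ⟨⟨(j : ℕ), h⟩, Finset.mem_univ _, by
        apply Fin.ext; simp [Fin.castLEEmb, Fin.castLE]⟩)
    rw [dif_neg h]

/-- A `Fin`-indexed characterization of the convex hull. -/
lemma aux_mem_convexHull_iff_fin {n : ℕ} {X : Set (EuclideanSpace ℝ (Fin (n+2)))}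
    {x : EuclideanSpace ℝ (Fin (n+2))} :
    x ∈ convexHull ℝ X ↔ ∃ (k : ℕ) (P : Fin k → EuclideanSpace ℝ (Fin (n+2)))
      (t : Fin k → ℝ), (∀ i, P i ∈ X) ∧ (∀ i, 0 ≤ t i) ∧ (∑ i, t i = 1) ∧
      ∑ i, t i • P i = x := by
  constructor
  · intro hx
    obtain ⟨ι, hι, z, w, hrange, _hindep, hwpos, hwsum, hxeq⟩ :=
      eq_pos_convex_span_of_mem_convexHull hx
    let e := Fintype.equivFin ι
    refine ⟨Fintype.card ι, fun i => z (e.symm i), fun i => w (e.symm i),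
      fun i => hrange ⟨e.symm i, rfl⟩, fun i => (hwpos _).le, ?_, ?_⟩
    · rw [← hwsum]
      exact (Fintype.sum_equiv e w _ (fun a => by simp)).symm
    · rw [← hxeq]
      exact (Fintype.sum_equiv e (fun a => w a • z a) _ (fun a => by simp)).symm
  · rintro ⟨k, P, t, hP, ht, htsum, rfl⟩
    have h := Finset.centerMass_mem_convexHull (Finset.univ : Finset (Fin k))
      (fun i _ => ht i) (by rw [htsum]; norm_num) (fun i _ => hP i)
    rwa [Finset.centerMass, htsum, inv_one, one_smul] at h

/-- Convex hull of a compact set in Euclidean space is compact. -/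
lemma aux_isCompact_convexHull {n : ℕ} {X : Set (EuclideanSpace ℝ (Fin (n+2)))}
    (hX : IsCompact X) : IsCompact (convexHull ℝ X) := by
  rcases X.eq_empty_or_nonempty with rfl | ⟨x₀, hx₀⟩
  · simp
  classical
  set m := n + 3 with hm
  set g : ((Fin m → ℝ) × (Fin m → EuclideanSpace ℝ (Fin (n+2)))) →
      EuclideanSpace ℝ (Fin (n+2)) := fun p => ∑ i, p.1 i • p.2 i with hg
  have hgc : Continuous g := by
    apply continuous_finset_sum
    intro i _
    exact ((continuous_apply i).comp continuous_fst).smul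
      ((continuous_apply i).comp continuous_snd)
  have hD : IsCompact ((stdSimplex ℝ (Fin m)) ×ˢ (Set.univ.pi fun _ : Fin m => X)) :=
    (isCompact_stdSimplex (𝕜 := ℝ) (ι := Fin m)).prod (isCompact_univ_pi fun _ => hX)
  have himg : convexHull ℝ X
      = g '' ((stdSimplex ℝ (Fin m)) ×ˢ (Set.univ.pi fun _ : Fin m => X)) := by
    apply Set.Subset.antisymm
    · intro x hx
      obtain ⟨ι, hι, z, w, hrange, hindep, hwpos, hwsum, hxeq⟩ :=
        eq_pos_convex_span_of_mem_convexHull hx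
      have hcard : Fintype.card ι ≤ m := by
        have h1 := hindep.card_le_finrank_succ
        have h2 : Module.finrank ℝ (vectorSpan ℝ (Set.range z)) ≤ n + 2 := by
          have h3 := Submodule.finrank_le (vectorSpan ℝ (Set.range z))
          simpa [finrank_euclideanSpace] using h3
        omega
      set k := Fintype.card ι with hk
      let e := Fintype.equivFin ι
      let t : Fin m → ℝ := fun j => if h : (j : ℕ) < k then w (e.symm ⟨j, h⟩) else 0
      let P : Fin m → EuclideanSpace ℝ (Fin (n+2)) :=
        fun j => if h : (j : ℕ) < k then z (e.symm ⟨j, h⟩) else x₀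
      have htsum : ∑ j, t j = 1 := by
        have h1 := aux_pad_sum hcard (fun i => w (e.symm i))
        have h2 : ∑ i : Fin k, w (e.symm i) = 1 := by
          rw [← hwsum]
          exact (Fintype.sum_equiv e w _ (fun a => by simp)).symm
        rw [show (∑ j, t j) = ∑ j : Fin m, if h : (j : ℕ) < k then
          (fun i => w (e.symm i)) ⟨j, h⟩ else 0 from rfl, h1, h2]
      refine ⟨(t, P), ⟨⟨fun j => ?_, htsum⟩, fun j _ => ?_⟩, ?_⟩
      · by_cases h : (j : ℕ) < k
        · simp only [t, dif_pos h]
          exact (hwpos _).le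
        · simp only [t, dif_neg h, le_refl]
      · by_cases h : (j : ℕ) < k
        · simp only [P, dif_pos h]
          exact hrange ⟨_, rfl⟩
        · simp only [P, dif_neg h]
          exact hx₀
      · show (∑ j, t j • P j) = x
        have hterm : ∀ j : Fin m, t j • P j = if h : (j : ℕ) < k then
            (fun i => w (e.symm i) • z (e.symm i)) ⟨j, h⟩ else 0 := by
          intro j
          by_cases h : (j : ℕ) < k
          · simp only [t, P, dif_pos h]
          · simp only [t, P, dif_neg h, zero_smul]
        rw [Finset.sum_congr rfl (fun j _ => hterm j),
          aux_pad_sum hcard (fun i => w (e.symm i) • z (e.symm i)), ← hxeq]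
        exact (Fintype.sum_equiv e (fun a => w a • z a) _ (fun a => by simp)).symm
    · rintro _ ⟨⟨t, P⟩, ⟨⟨ht0, ht1⟩, hP⟩, rfl⟩
      exact aux_mem_convexHull_iff_fin.mpr
        ⟨m, P, t, fun i => hP i (Set.mem_univ i), ht0, ht1, rfl⟩
  rw [himg]
  exact hD.image hgc

theorem stmt_7 {n : ℕ} (X : Set (EuclideanSpace ℝ (Fin (n+2))))
    (hsub : X ⊆ sphereSet n) (hcl : IsClosed X) (hhem : Hemispherical X) :
    sconv X = sphPolar (sphPolar (sconv X)) := by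
  classical
  rcases X.eq_empty_or_nonempty with rfl | ⟨x₀, hx₀⟩
  · -- empty case
    have hsconv : sconv (∅ : Set (EuclideanSpace ℝ (Fin (n+2)))) = ∅ := by
      ext z
      simp only [sconv, Set.mem_setOf_eq, Set.mem_empty_iff_false, iff_false]
      rintro ⟨k, P, t, hP, ht, htsum, rfl⟩
      rcases k with _ | k
      · simp at htsum
      · exact hP 0
    rw [hsconv]
    have h1 : sphPolar (∅ : Set (EuclideanSpace ℝ (Fin (n+2)))) = Set.univ := by
      simp [sphPolar]
    rw [h1]
    ext z
    simp only [Set.mem_empty_iff_false, false_iff, sphPolar]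
    intro hz
    have h2 : z ∈ hemi (-z) := by
      have := Set.mem_iInter₂.mp hz (-z) (Set.mem_univ _)
      exact this
    obtain ⟨hzs, hzi⟩ := h2
    have hnorm : ‖z‖ = 1 := by
      simpa [sphereSet, mem_sphere_zero_iff_norm] using hzs
    rw [inner_neg_left, real_inner_self_eq_norm_mul_norm, hnorm] at hzi
    linarith
  -- nonempty case
  obtain ⟨P₀, hP₀s, hP₀⟩ := hhem
  have hP₀neg : ∀ x ∈ X, ⟪P₀, x⟫ < 0 := by
    intro x hx
    by_contra h
    push_neg at h
    have : x ∈ hemi P₀ ∩ X := ⟨⟨hsub hx, h⟩, hx⟩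
    rw [hP₀] at this
    exact this
  set C : Set (EuclideanSpace ℝ (Fin (n+2))) := convexHull ℝ X with hC
  have hCconv : Convex ℝ C := convex_convexHull ℝ X
  have hCne : C.Nonempty := ⟨x₀, subset_convexHull ℝ X hx₀⟩
  have hCneg : ∀ w ∈ C, ⟪P₀, w⟫ < 0 := by
    intro w hw
    have hconv : Convex ℝ {w : EuclideanSpace ℝ (Fin (n+2)) | ⟪P₀, w⟫ < 0} :=
      convex_halfSpace_lt ⟨fun a b => inner_add_right _ _ _,
        fun c a => real_inner_smul_right _ _ _⟩ 0
    have hsub' : X ⊆ {w : EuclideanSpace ℝ (Fin (n+2)) | ⟪P₀, w⟫ < 0} :=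
      fun x hx => hP₀neg x hx
    exact convexHull_min hsub' hconv hw
  have hCne0 : ∀ w ∈ C, w ≠ 0 := by
    intro w hw h0
    have := hCneg w hw
    rw [h0, inner_zero_right] at this
    exact lt_irrefl _ this
  -- sconv as normalized image of C
  set f : EuclideanSpace ℝ (Fin (n+2)) → EuclideanSpace ℝ (Fin (n+2)) := fun w => ‖w‖⁻¹ • w with hf
  have hSrep : sconv X = f '' C := by
    ext z
    constructor
    · rintro ⟨k, P, t, hP, ht, htsum, rfl⟩
      exact ⟨∑ i, t i • P i,
        aux_mem_convexHull_iff_fin.mpr ⟨k, P, t, hP, ht, htsum, rfl⟩, rfl⟩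
    · rintro ⟨w, hw, rfl⟩
      obtain ⟨k, P, t, hP, ht, htsum, hval⟩ := aux_mem_convexHull_iff_fin.mp hw
      exact ⟨k, P, t, hP, ht, htsum, by rw [hval]⟩
  have hSnorm : ∀ z ∈ sconv X, ‖z‖ = 1 := by
    rw [hSrep]
    rintro _ ⟨w, hw, rfl⟩
    have hwne : w ≠ 0 := hCne0 w hw
    have hwn : ‖w‖ ≠ 0 := norm_ne_zero_iff.mpr hwne
    simp only [f, norm_smul, norm_inv, norm_norm]
    field_simp
  -- the cone over C
  set K : Set (EuclideanSpace ℝ (Fin (n+2))) := {y | ∃ c : ℝ, 0 ≤ c ∧ ∃ w ∈ C, y = c • w} with hK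
  have hSK : sconv X ⊆ K := by
    rw [hSrep]
    rintro _ ⟨w, hw, rfl⟩
    exact ⟨‖w‖⁻¹, inv_nonneg.mpr (norm_nonneg w), w, hw, rfl⟩
  have hKS : ∀ y ∈ K, ‖y‖ = 1 → y ∈ sconv X := by
    rintro y ⟨c, hc, w, hw, rfl⟩ hn
    rw [hSrep]
    have hwn : ‖w‖ ≠ 0 := norm_ne_zero_iff.mpr (hCne0 w hw)
    have hcw : c * ‖w‖ = 1 := by
      rw [norm_smul, Real.norm_eq_abs, abs_of_nonneg hc] at hn
      exact hn
    have hceq : c = ‖w‖⁻¹ := by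
      field_simp at hcw ⊢
      linarith [hcw]
    exact ⟨w, hw, by rw [hceq]⟩
  -- K is a closed convex cone
  have hKcone_smul : ∀ {c : ℝ}, 0 < c → ∀ {y : EuclideanSpace ℝ (Fin (n+2))}, y ∈ K → c • y ∈ K := by
    rintro c hc y ⟨c', hc', w, hw, rfl⟩
    exact ⟨c * c', mul_nonneg hc.le hc', w, hw, smul_smul c c' w⟩
  have hKcone_add : ∀ {y z : EuclideanSpace ℝ (Fin (n+2))}, y ∈ K → z ∈ K → y + z ∈ K := by
    rintro _ _ ⟨c, hc, w, hw, rfl⟩ ⟨c', hc', w', hw', rfl⟩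
    rcases eq_or_lt_of_le (add_nonneg hc hc') with hs | hs
    · have hc0 : c = 0 := by linarith
      have hc'0 : c' = 0 := by linarith
      refine ⟨0, le_refl 0, w, hw, ?_⟩
      rw [hc0, hc'0]
      simp
    · set s := c + c' with hsdef
      have hmem : (c / s) • w + (c' / s) • w' ∈ C :=
        hCconv hw hw' (div_nonneg hc hs.le) (div_nonneg hc' hs.le)
          (by field_simp; linarith)
      refine ⟨s, hs.le, _, hmem, ?_⟩
      rw [smul_add, smul_smul, smul_smul, mul_div_cancel₀ _ hs.ne',
        mul_div_cancel₀ _ hs.ne']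
  set Kcone : ConvexCone ℝ (EuclideanSpace ℝ (Fin (n+2))) :=
    { carrier := K
      smul_mem' := fun c hc y hy => hKcone_smul hc hy
      add_mem' := fun y hy z hz => hKcone_add hy hz } with hKcone
  have hKne : (Kcone : Set (EuclideanSpace ℝ (Fin (n+2)))).Nonempty := by
    obtain ⟨w, hw⟩ := hCne
    exact ⟨w, 1, zero_le_one, w, hw, (one_smul ℝ w).symm⟩
  -- closedness of K
  have hXcomp : IsCompact X :=
    Metric.isCompact_of_isClosed_isBounded hcl
      ((Metric.isBounded_sphere).subset hsub)
  have hCcomp : IsCompact C := aux_isCompact_convexHull hXcomp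
  have hfC : ContinuousOn f C := by
    intro w hw
    apply ContinuousAt.continuousWithinAt
    have hwn : ‖w‖ ≠ 0 := norm_ne_zero_iff.mpr (hCne0 w hw)
    exact ((continuousAt_id.norm).inv₀ hwn).smul continuousAt_id
  have hScomp : IsCompact (sconv X) := by
    rw [hSrep]; exact hCcomp.image_of_continuousOn hfC
  have hfK : ∀ y ∈ K, y ≠ 0 → f y ∈ sconv X := by
    rintro _ ⟨c, hc, w, hw, rfl⟩ hne
    have hcpos : 0 < c := by
      rcases hc.lt_or_eq with h | h
      · exact h
      · exfalso; apply hne; rw [← h, zero_smul]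
    have hwn : ‖w‖ ≠ 0 := norm_ne_zero_iff.mpr (hCne0 w hw)
    rw [hSrep]
    refine ⟨w, hw, ?_⟩
    simp only [f, norm_smul, Real.norm_eq_abs, abs_of_pos hcpos, smul_smul]
    congr 1
    field_simp
  have hKclosed : IsClosed K := by
    apply isClosed_of_closure_subset
    intro y hy
    rcases eq_or_ne y 0 with rfl | hyne
    · obtain ⟨w, hw⟩ := hCne
      exact ⟨0, le_refl 0, w, hw, (zero_smul ℝ w).symm⟩
    · obtain ⟨u, hu, hulim⟩ := mem_closure_iff_seq_limit.mp hy
      have hynorm : 0 < ‖y‖ := norm_pos_iff.mpr hyne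
      have hnl : Filter.Tendsto (fun k => ‖u k‖) Filter.atTop (nhds ‖y‖) :=
        (continuous_norm.tendsto y).comp hulim
      have hev : ∀ᶠ k in Filter.atTop, 0 < ‖u k‖ :=
        hnl.eventually (eventually_gt_nhds hynorm)
      obtain ⟨N, hN⟩ := Filter.eventually_atTop.mp hev
      have hfu : ∀ k, f (u (k + N)) ∈ sconv X := fun k =>
        hfK _ (hu (k + N)) (norm_pos_iff.mp (hN (k + N) (Nat.le_add_left N k)))
      have hulim' : Filter.Tendsto (fun k => u (k + N)) Filter.atTop (nhds y) :=
        hulim.comp (Filter.tendsto_add_atTop_nat N)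
      have hfcont : ContinuousAt f y :=
        ((continuousAt_id.norm).inv₀ hynorm.ne').smul continuousAt_id
      have hflim : Filter.Tendsto (fun k => f (u (k + N))) Filter.atTop (nhds (f y)) :=
        (hfcont.tendsto).comp hulim'
      have hfyS : f y ∈ sconv X :=
        hScomp.isClosed.mem_of_tendsto hflim (Filter.Eventually.of_forall hfu)
      obtain ⟨c, hc, w, hw, hfw⟩ := hSK hfyS
      refine ⟨‖y‖ * c, mul_nonneg hynorm.le hc, w, hw, ?_⟩
      have hy' : y = ‖y‖ • f y := by
        simp only [f, smul_smul]
        rw [mul_inv_cancel₀ hynorm.ne', one_smul]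
      rw [← smul_smul, ← hfw]
      exact hy'
  -- polar membership characterizations
  have hpolar_mem : ∀ (Y : Set (EuclideanSpace ℝ (Fin (n+2)))) (Q : EuclideanSpace ℝ (Fin (n+2))), Q ∈ sphPolar Y ↔
      ∀ p ∈ Y, Q ∈ sphereSet n ∧ 0 ≤ ⟪p, Q⟫ := by
    intro Y Q
    simp only [sphPolar, Set.mem_iInter, hemi, Set.mem_setOf_eq]
  have hsphere_norm : ∀ Q : EuclideanSpace ℝ (Fin (n+2)), Q ∈ sphereSet n ↔ ‖Q‖ = 1 := by
    intro Q
    simp [sphereSet, mem_sphere_zero_iff_norm]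
  -- main equality
  ext z
  constructor
  · -- easy inclusion
    intro hz
    rw [hpolar_mem]
    intro Q hQ
    refine ⟨(hsphere_norm z).mpr (hSnorm z hz), ?_⟩
    rw [hpolar_mem] at hQ
    have := (hQ z hz).2
    rwa [real_inner_comm] at this
  · -- hard inclusion
    intro hz
    rw [hpolar_mem] at hz
    -- sphPolar (sconv X) is nonempty, containing -P₀
    have hP₀mem : -P₀ ∈ sphPolar (sconv X) := by
      rw [hpolar_mem]
      intro p hp
      constructor
      · rw [hsphere_norm, norm_neg]
        exact (hsphere_norm P₀).mp hP₀s
      · rw [hSrep] at hp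
        obtain ⟨w, hw, rfl⟩ := hp
        rw [inner_neg_right, real_inner_comm]
        simp only [f, real_inner_smul_right]
        have h1 := hCneg w hw
        have h2 : (0:ℝ) ≤ ‖w‖⁻¹ := inv_nonneg.mpr (norm_nonneg w)
        nlinarith
    have hznorm : ‖z‖ = 1 := (hsphere_norm z).mp (hz _ hP₀mem).1
    by_contra hzS
    have hzK : z ∉ Kcone := fun h => hzS (hKS z h hznorm)
    obtain ⟨y, hy1, hy2⟩ : ∃ y, (∀ x ∈ K, 0 ≤ ⟪x, y⟫) ∧ ⟪y, z⟫ < 0 := by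
      have hKpt : Kcone.Pointed := by
        obtain ⟨w, hw⟩ := hCne
        exact ⟨0, le_refl 0, w, hw, (zero_smul ℝ w).symm⟩
      obtain ⟨y, h1, h2⟩ := ProperCone.hyperplane_separation'
        ({ toSubmodule := Kcone.toPointedCone hKpt, isClosed' := hKclosed } :
          ProperCone ℝ (EuclideanSpace ℝ (Fin (n+2)))) (x₀ := z) hzK
      exact ⟨y, h1, by rwa [real_inner_comm]⟩
    have hyne : y ≠ 0 := by
      intro h
      rw [h, inner_zero_left] at hy2
      exact lt_irrefl _ hy2
    have hynorm : (0:ℝ) < ‖y‖ := norm_pos_iff.mpr hyne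
    have hQmem : ‖y‖⁻¹ • y ∈ sphPolar (sconv X) := by
      rw [hpolar_mem]
      intro p hp
      constructor
      · rw [hsphere_norm, norm_smul, norm_inv, norm_norm, inv_mul_cancel₀ hynorm.ne']
      · rw [real_inner_smul_right]
        exact mul_nonneg (inv_nonneg.mpr hynorm.le) (hy1 p (hSK hp))
    have hcontra := (hz _ hQmem).2
    rw [real_inner_smul_left] at hcontra
    have h3 : (0:ℝ) < ‖y‖⁻¹ := inv_pos.mpr hynorm
    exact absurd hcontra (not_le.mpr (mul_neg_of_pos_of_neg h3 hy2))
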